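/- arXiv:1410.7249 — 4 statements merged into one kernel-verified Lean document; each statement's English description precedes it below -/
import Mathlib

section
/- Let 0 < α < 1, L1, L2 > 0, and p > 0. Among all constant allocations (r·p, (1-r)·p) with r ∈ (0,1) for two independent tasks of lengths L1 and L2, the makespan max(L1/(r p)^α, L2/((1-r) p)^α) is minimized uniquely at r = L1^(1/α)/(L1^(1/α)+L2^(1/α)), where it equals (L1^(1/α)+L2^(1/α))^α / p^α. -/
theorem stmt_1 (α L1 L2 p : ℝ) (hα0 : 0 < α) (hα1 : α < 1)
    (hL1 : 0 < L1) (hL2 : 0 < L2) (hp : 0 < p) :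
    let rstar : ℝ := L1 ^ (1 / α) / (L1 ^ (1 / α) + L2 ^ (1 / α))
    let M : ℝ → ℝ := fun r => max (L1 / (r * p) ^ α) (L2 / ((1 - r) * p) ^ α)
    (0 < rstar ∧ rstar < 1) ∧
    M rstar = (L1 ^ (1 / α) + L2 ^ (1 / α)) ^ α / p ^ α ∧
    (∀ r : ℝ, 0 < r → r < 1 → r ≠ rstar → M rstar < M r) := by
  intro rstar M
  set A := L1 ^ (1 / α) with hAdef
  set B := L2 ^ (1 / α) with hBdef
  have hA : 0 < A := Real.rpow_pos_of_pos hL1 _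
  have hB : 0 < B := Real.rpow_pos_of_pos hL2 _
  have hS : 0 < A + B := by linarith
  have hr0 : 0 < rstar := div_pos hA hS
  have hr1 : rstar < 1 := by
    rw [show rstar = A / (A + B) from rfl, div_lt_one hS]; linarith
  have hAα : A ^ α = L1 := by
    rw [hAdef, ← Real.rpow_mul hL1.le, one_div_mul_cancel hα0.ne', Real.rpow_one]
  have hBα : B ^ α = L2 := by
    rw [hBdef, ← Real.rpow_mul hL2.le, one_div_mul_cancel hα0.ne', Real.rpow_one]
  have hSα : 0 < (A + B) ^ α := Real.rpow_pos_of_pos hS _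
  have hpα : 0 < p ^ α := Real.rpow_pos_of_pos hp _
  have h1mr : 1 - rstar = B / (A + B) := by
    rw [show rstar = A / (A + B) from rfl]; field_simp; ring
  have key1 : L1 / (rstar * p) ^ α = (A + B) ^ α / p ^ α := by
    rw [show rstar = A / (A + B) from rfl,
      Real.mul_rpow (by positivity) hp.le, Real.div_rpow hA.le hS.le, hAα]
    field_simp
  have key2 : L2 / ((1 - rstar) * p) ^ α = (A + B) ^ α / p ^ α := by
    rw [h1mr, Real.mul_rpow (by positivity) hp.le, Real.div_rpow hB.le hS.le, hBα]
    field_simp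
  have hM : M rstar = (A + B) ^ α / p ^ α := by
    show max _ _ = _
    rw [key1, key2, max_self]
  refine ⟨⟨hr0, hr1⟩, hM, ?_⟩
  intro r h0 h1 hne
  rcases lt_or_gt_of_ne hne with h | h
  · -- r < rstar : first component of M r is larger
    have hlt : (r * p) ^ α < (rstar * p) ^ α :=
      Real.rpow_lt_rpow (mul_nonneg h0.le hp.le) (by nlinarith) hα0
    have h2 : L1 / (rstar * p) ^ α < L1 / (r * p) ^ α :=
      div_lt_div_of_pos_left hL1 (Real.rpow_pos_of_pos (mul_pos h0 hp) _) hlt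
    calc M rstar = L1 / (rstar * p) ^ α := by rw [hM, key1]
      _ < L1 / (r * p) ^ α := h2
      _ ≤ M r := le_max_left _ _
  · -- rstar < r : second component
    have hlt : ((1 - r) * p) ^ α < ((1 - rstar) * p) ^ α :=
      Real.rpow_lt_rpow (mul_nonneg (by linarith) hp.le) (by nlinarith) hα0
    have h2 : L2 / ((1 - rstar) * p) ^ α < L2 / ((1 - r) * p) ^ α :=
      div_lt_div_of_pos_left hL2 (Real.rpow_pos_of_pos (mul_pos (by linarith) hp) _) hlt
    calc M rstar = L2 / ((1 - rstar) * p) ^ α := by rw [hM, key2]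
      _ < L2 / ((1 - r) * p) ^ α := h2
      _ ≤ M r := le_max_right _ _
end

section
/- Let 0 < α < 1, Δ1, Δ2 > 0, ε > 0, and 0 < u < v with ū = u + ε·Δ2 and v̄ = v − ε·Δ1 satisfying ū < v̄. Then Δ1·ū^α + Δ2·v̄^α > Δ1·u^α + Δ2·v^α. -/
theorem stmt_6 (α Δ1 Δ2 ε u v : ℝ) (hα0 : 0 < α) (hα1 : α < 1)
    (hΔ1 : 0 < Δ1) (hΔ2 : 0 < Δ2) (hε : 0 < ε)
    (hu : 0 < u) (huv : u < v)
    (hlt : u + ε * Δ2 < v - ε * Δ1) :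
    Δ1 * (u + ε * Δ2) ^ α + Δ2 * (v - ε * Δ1) ^ α >
      Δ1 * u ^ α + Δ2 * v ^ α := by
  have hf := Real.strictConcaveOn_rpow hα0 hα1
  set f : ℝ → ℝ := fun x : ℝ => x ^ α with hfdef
  have h1 : u < u + ε * Δ2 := by nlinarith
  have h2 : v - ε * Δ1 < v := by nlinarith
  have hu' : (0:ℝ) ≤ u := hu.le
  have hv' : (0:ℝ) ≤ v := by linarith
  have hub : (0:ℝ) ≤ u + ε * Δ2 := by nlinarith
  have s1 : (f (v - ε * Δ1) - f (u + ε * Δ2)) / ((v - ε * Δ1) - (u + ε * Δ2))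
      < (f (u + ε * Δ2) - f u) / ((u + ε * Δ2) - u) :=
    hf.slope_anti_adjacent hu' (by simp [Set.mem_Ici]; nlinarith) h1 hlt
  have s2 : (f v - f (v - ε * Δ1)) / (v - (v - ε * Δ1))
      < (f (v - ε * Δ1) - f (u + ε * Δ2)) / ((v - ε * Δ1) - (u + ε * Δ2)) :=
    hf.slope_anti_adjacent hub hv' hlt h2
  have key : (f v - f (v - ε * Δ1)) / (ε * Δ1) < (f (u + ε * Δ2) - f u) / (ε * Δ2) := by
    have e1 : (u + ε * Δ2) - u = ε * Δ2 := by ring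
    have e2 : v - (v - ε * Δ1) = ε * Δ1 := by ring
    rw [e1] at s1; rw [e2] at s2; linarith
  have hp1 : (0:ℝ) < ε * Δ1 := by positivity
  have hp2 : (0:ℝ) < ε * Δ2 := by positivity
  rw [div_lt_div_iff₀ hp1 hp2] at key
  have : Δ1 * (f (u + ε * Δ2) - f u) > Δ2 * (f v - f (v - ε * Δ1)) := by nlinarith
  simp only [hfdef] at this
  nlinarith
end

section
/- Let n ≥ 3 and p > 0, and let p_1, …, p_n be positive reals with each p_i ≤ p and Σ p_i = 2p. Then there exists a partition of {1,…,n} into three sets S1, S2, S3 such that Σ_{i∈S_k} p_i ≤ p for each k ∈ {1,2,3}. -/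
theorem stmt_10 (n : ℕ) (hn : 3 ≤ n) (p : ℝ) (hp : 0 < p)
    (w : Fin n → ℝ) (hwpos : ∀ i, 0 < w i) (hwle : ∀ i, w i ≤ p)
    (hsum : ∑ i, w i = 2 * p) :
    ∃ f : Fin n → Fin 3, ∀ k : Fin 3,
      ∑ i ∈ Finset.univ.filter (fun i => f i = k), w i ≤ p := by
  classical
  set T : ℕ → ℝ := fun m => ∑ i ∈ Finset.univ.filter (fun i : Fin n => (i : ℕ) < m), w i
    with hT
  have hTn : T n = 2 * p := by
    rw [hT]
    simp only
    rw [Finset.filter_true_of_mem (fun i _ => i.is_lt)]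
    exact hsum
  have hex : ∃ m, p < T m := ⟨n, by rw [hTn]; linarith⟩
  set m₀ := Nat.find hex with hm₀
  have hPm₀ : p < T m₀ := Nat.find_spec hex
  have hm₀le : m₀ ≤ n := Nat.find_min' hex (by rw [hTn]; linarith)
  have hm₀pos : 1 ≤ m₀ := by
    by_contra h
    push_neg at h
    interval_cases m₀
    · have : T 0 = 0 := by rw [hT]; simp
      rw [this] at hPm₀; linarith
  set a := m₀ - 1 with ha
  have ham₀ : a + 1 = m₀ := Nat.succ_pred_eq_of_pos hm₀pos
  have haltn : a < n := by omega
  have hTa : T a ≤ p := by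
    have := Nat.find_min hex (m := a) (by omega)
    push_neg at this
    exact this
  have hsplit : T m₀ = T a + w ⟨a, haltn⟩ := by
    rw [hT]
    simp only
    have : (Finset.univ.filter (fun i : Fin n => (i : ℕ) < m₀))
        = insert ⟨a, haltn⟩ (Finset.univ.filter (fun i : Fin n => (i : ℕ) < a)) := by
      ext i
      simp only [Finset.mem_filter, Finset.mem_univ, true_and, Finset.mem_insert]
      constructor
      · intro h
        rcases Nat.lt_or_ge (i : ℕ) a with h' | h'
        · exact Or.inr h'
        · left
          apply Fin.ext
          simp only [Fin.val_mk]
          omega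
      · rintro (rfl | h)
        · show a < m₀; omega
        · omega
    rw [this, Finset.sum_insert (by simp)]
    ring
  refine ⟨fun i => if (i : ℕ) < a then 0 else if (i : ℕ) = a then 1 else 2, ?_⟩
  intro k
  fin_cases k
  · show ∑ i ∈ Finset.univ.filter
        (fun i : Fin n => (if (i : ℕ) < a then (0 : Fin 3) else if (i : ℕ) = a then 1 else 2) = 0),
        w i ≤ p
    have heq : (Finset.univ.filter (fun i : Fin n =>
        (if (i : ℕ) < a then (0 : Fin 3) else if (i : ℕ) = a then 1 else 2) = 0))
        = Finset.univ.filter (fun i : Fin n => (i : ℕ) < a) := by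
      ext i
      simp only [Finset.mem_filter, Finset.mem_univ, true_and]
      by_cases h1 : (i : ℕ) < a
      · simp [h1]
      · by_cases h2 : (i : ℕ) = a <;> simp [h1, h2]
    rw [heq]
    exact hTa
  · show ∑ i ∈ Finset.univ.filter
        (fun i : Fin n => (if (i : ℕ) < a then (0 : Fin 3) else if (i : ℕ) = a then 1 else 2) = 1),
        w i ≤ p
    have heq : (Finset.univ.filter (fun i : Fin n =>
        (if (i : ℕ) < a then (0 : Fin 3) else if (i : ℕ) = a then 1 else 2) = 1))
        = {⟨a, haltn⟩} := by
      ext i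
      simp only [Finset.mem_filter, Finset.mem_univ, true_and, Finset.mem_singleton]
      by_cases h1 : (i : ℕ) < a
      · simp only [h1, if_true]
        constructor
        · intro h; exact absurd h (by decide)
        · intro h; subst h; exact absurd h1 (lt_irrefl a)
      · by_cases h2 : (i : ℕ) = a
        · simp only [h1, h2, if_false, if_true]
          constructor
          · intro _; exact Fin.ext h2
          · intro _; simp
        · simp only [h1, h2, if_false]
          constructor
          · intro h; exact absurd h (by decide)
          · intro h; subst h; exact absurd rfl h2
    rw [heq, Finset.sum_singleton]
    exact hwle _
  · show ∑ i ∈ Finset.univ.filter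
        (fun i : Fin n => (if (i : ℕ) < a then (0 : Fin 3) else if (i : ℕ) = a then 1 else 2) = 2),
        w i ≤ p
    have heq : (Finset.univ.filter (fun i : Fin n =>
        (if (i : ℕ) < a then (0 : Fin 3) else if (i : ℕ) = a then 1 else 2) = 2))
        = Finset.univ.filter (fun i : Fin n => ¬ (i : ℕ) < m₀) := by
      ext i
      simp only [Finset.mem_filter, Finset.mem_univ, true_and]
      by_cases h1 : (i : ℕ) < a
      · simp only [h1, if_true]
        constructor
        · intro h; exact absurd h (by decide)
        · intro h; omega
      · by_cases h2 : (i : ℕ) = a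
        · simp only [h1, h2, if_false, if_true]
          constructor
          · intro h; simp at h
          · intro h; omega
        · simp only [h1, h2, if_false]
          constructor
          · intro _; omega
          · intro _; trivial
    rw [heq]
    have hadd := Finset.sum_filter_add_sum_filter_not Finset.univ
      (fun i : Fin n => (i : ℕ) < m₀) w
    rw [hsum] at hadd
    have : T m₀ + ∑ i ∈ Finset.univ.filter (fun i : Fin n => ¬ (i : ℕ) < m₀), w i = 2 * p := hadd
    linarith
end

section
/- Let 0 < α ≤ 1, p, q > 0, x_1,…,x_n > 0 with S = Σ x_i, and let A* be a subset with Σ* := Σ_{i∈A*} x_i ≤ p·S/(p+q) achieving makespan M_OPT = ((S − Σ*)/q)^α. Let 0 < κ < 1 and let A be a subset with κ·Σ* ≤ Σ_{i∈A} x_i ≤ Σ*. Then the makespan M_A of the schedule assigning A to the p-node satisfies M_A / M_OPT ≤ (1 + (p/q)(1−κ))^α. -/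
theorem stmt_14 (α p q κ : ℝ) (n : ℕ) (x : Fin n → ℝ)
    (hα0 : 0 < α) (hα1 : α ≤ 1) (hp : 0 < p) (hq : 0 < q)
    (hκ0 : 0 < κ) (hκ1 : κ < 1) (hx : ∀ i, 0 < x i)
    (Astar A : Finset (Fin n)) :
    let S : ℝ := ∑ i, x i
    let Sstar : ℝ := ∑ i ∈ Astar, x i
    let MOPT : ℝ := ((S - Sstar) / q) ^ α
    let MA : ℝ := max (((∑ i ∈ A, x i) / p) ^ α) (((∑ i ∈ Aᶜ, x i) / q) ^ α)
    Sstar ≤ p * S / (p + q) →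
    κ * Sstar ≤ ∑ i ∈ A, x i → ∑ i ∈ A, x i ≤ Sstar →
    MA / MOPT ≤ (1 + (p / q) * (1 - κ)) ^ α := by
  intro S Sstar MOPT MA h1 h2 h3
  set σ : ℝ := ∑ i ∈ A, x i with hσdef
  have hsum : σ + ∑ i ∈ Aᶜ, x i = S := Finset.sum_add_sum_compl A x
  have hσ0 : 0 ≤ σ := Finset.sum_nonneg fun i _ => (hx i).le
  have hSstar0 : 0 ≤ Sstar := Finset.sum_nonneg fun i _ => (hx i).le
  have hSstarS : Sstar ≤ S :=
    Finset.sum_le_sum_of_subset_of_nonneg (Finset.subset_univ _) fun i _ _ => (hx i).le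
  have hcompl : ∑ i ∈ Aᶜ, x i = S - σ := by linarith
  have hrq : p / q * q = p := div_mul_cancel₀ p hq.ne'
  have hc0 : (0:ℝ) ≤ 1 + p / q * (1 - κ) := by
    have : 0 < p / q := div_pos hp hq
    nlinarith
  have hS0 : 0 ≤ S := Finset.sum_nonneg fun i _ => (hx i).le
  rcases eq_or_lt_of_le hS0 with hS | hS
  · -- degenerate case S = 0
    have hSs : Sstar = 0 := by linarith
    have hM : MOPT = 0 := by
      simp only [MOPT, hSs, ← hS, sub_zero, zero_div]
      exact Real.zero_rpow hα0.ne'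
    rw [hM, div_zero]
    exact Real.rpow_nonneg hc0 α
  · have hpq : 0 < p + q := by linarith
    have hkey1 : Sstar * (p + q) ≤ p * S := by
      calc Sstar * (p + q) ≤ p * S / (p + q) * (p + q) := by
            exact mul_le_mul_of_nonneg_right h1 hpq.le
        _ = p * S := div_mul_cancel₀ _ hpq.ne'
    have hSd : 0 < S - Sstar := by nlinarith
    have hmax : σ / p ≤ (S - σ) / q := by
      rw [div_le_div_iff₀ hp hq]
      nlinarith
    have hMA : MA = ((S - σ) / q) ^ α := by
      have h := Real.rpow_le_rpow (by positivity) hmax hα0.le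
      simp only [MA, hcompl]
      exact max_eq_right h
    have hkeyq : S - σ ≤ (1 + p / q * (1 - κ)) * (S - Sstar) := by
      have h1κ : (0:ℝ) ≤ 1 - κ := by linarith
      have hpos : 0 ≤ p * (S - Sstar) - q * Sstar := by nlinarith
      have hprod : 0 ≤ (1 - κ) * (p * (S - Sstar) - q * Sstar) :=
        mul_nonneg h1κ hpos
      have hq' : q ≠ 0 := hq.ne'
      rw [← sub_nonneg]
      have expand : (1 + p / q * (1 - κ)) * (S - Sstar) - (S - σ)
          = (σ - Sstar) + (1 - κ) * (p / q) * (S - Sstar) := by ring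
      rw [expand]
      -- σ - Sstar ≥ κ*Sstar - Sstar = -(1-κ)*Sstar
      have h2' : σ - Sstar ≥ -((1 - κ) * Sstar) := by nlinarith
      have : (1 - κ) * (p / q) * (S - Sstar) ≥ (1 - κ) * Sstar := by
        rw [ge_iff_le, ← sub_nonneg]
        have : (1 - κ) * (p / q) * (S - Sstar) - (1 - κ) * Sstar
            = (1 - κ) * (p * (S - Sstar) - q * Sstar) / q := by
          field_simp
        rw [this]
        positivity
      linarith
    have hMOPT : 0 < MOPT := Real.rpow_pos_of_pos (by positivity) α
    rw [hMA, div_le_iff₀ hMOPT]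
    calc ((S - σ) / q) ^ α
        ≤ ((1 + p / q * (1 - κ)) * ((S - Sstar) / q)) ^ α := by
          apply Real.rpow_le_rpow (div_nonneg (by linarith) hq.le) _ hα0.le
          rw [mul_div_assoc']
          rw [div_le_div_iff₀ hq hq]
          nlinarith [hkeyq]
      _ = (1 + p / q * (1 - κ)) ^ α * MOPT := Real.mul_rpow hc0 (by positivity)
end
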